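/- Fix r ≥ 0, s ∈ ℝ, let j = max{i : γ(x_i) ≤ s}, and for 0 ≤ i ≤ j let U_i = SelDel_r(X_j, X_i) ∪ Del_{r,s}(γ). If σ ∈ U_{i−1} \ U_i, then both σ \ {x_i} and σ ∪ {x_i} lie in U_{i−1} \ U_i; consequently U_{i−1} \ U_i is partitioned into pairs (σ − x_i, σ + x_i), giving a gradient vector field whose collapse shows U_{i−1} ↘ U_i, and hence Čech_{r,s}(γ) ↘ Del_{r,s}(γ). -/
import Mathlib


open Finset

variable {d n : ℕ}

/-- `σ ∈ SelDel_r(Y, E)`: `σ` is a nonempty subset of `Y` admitting a sphere of radius at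
most `r` with all of `σ` on or inside and no point of `E` strictly inside. -/
def SelDelMem (x : Fin n → EuclideanSpace ℝ (Fin d)) (Y E : Finset (Fin n)) (r : ℝ)
    (σ : Finset (Fin n)) : Prop :=
  σ.Nonempty ∧ σ ⊆ Y ∧
    ∃ (c : EuclideanSpace ℝ (Fin d)) (r' : ℝ), r' ≤ r ∧
      (∀ i ∈ σ, dist (x i) c ≤ r') ∧ ∀ i ∈ E, r' ≤ dist (x i) c

/-- `σ ∈ Del_{r,s}(γ)`: `γ(max σ) ≤ s` and `σ ∈ SelDel_r(X_k, X_{k-1})` where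
`x_k = max σ`. -/
def DelBiMem (x : Fin n → EuclideanSpace ℝ (Fin d)) (γ : Fin n → ℝ) (r s : ℝ)
    (σ : Finset (Fin n)) : Prop :=
  ∃ h : σ.Nonempty, γ (σ.max' h) ≤ s ∧
    SelDelMem x (Finset.univ.filter fun t => t ≤ σ.max' h)
      (Finset.univ.filter fun t => t < σ.max' h) r σ

/-- An elementary (free-face) collapse between abstract simplicial complexes. -/
def ElemCollapse (K L : Set (Finset (Fin n))) : Prop :=
  ∃ σ τ : Finset (Fin n), σ ∈ K ∧ τ ∈ K ∧ σ ⊂ τ ∧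
    (∀ υ ∈ K, σ ⊂ υ → υ = τ) ∧ L = K \ {σ, τ}

/-- `K ↘ L`: a finite sequence of elementary collapses from `K` to `L`. -/
def CollapsesTo (K L : Set (Finset (Fin n))) : Prop :=
  Relation.ReflTransGen (fun A B => ElemCollapse A B) K L

/-- The filtration step `U_{i-1} = SelDel_r(X_j, X_{i-1}) ∪ Del_{r,s}(γ)`, i.e. the complex
just before processing the point `x_i`. -/
def Ubefore (x : Fin n → EuclideanSpace ℝ (Fin d)) (γ : Fin n → ℝ) (r s : ℝ)
    (j i : Fin n) : Set (Finset (Fin n)) :=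
  {σ | SelDelMem x (Finset.univ.filter fun t => t ≤ j)
        (Finset.univ.filter fun t => t < i) r σ ∨ DelBiMem x γ r s σ}

/-- The filtration step `U_i = SelDel_r(X_j, X_i) ∪ Del_{r,s}(γ)`. -/
def Uafter (x : Fin n → EuclideanSpace ℝ (Fin d)) (γ : Fin n → ℝ) (r s : ℝ)
    (j i : Fin n) : Set (Finset (Fin n)) :=
  {σ | SelDelMem x (Finset.univ.filter fun t => t ≤ j)
        (Finset.univ.filter fun t => t ≤ i) r σ ∨ DelBiMem x γ r s σ}

private lemma BE_normid (t : ℝ) (u v : EuclideanSpace ℝ (Fin d)) :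
    ‖(1-t)•u + t•v‖^2 = (1-t)*‖u‖^2 + t*‖v‖^2 - t*(1-t)*‖u-v‖^2 := by
  have e1 : (1-t)•u + t•v = u + t•(v-u) := by module
  rw [e1, norm_add_sq_real, real_inner_smul_right, inner_sub_right,
    real_inner_self_eq_norm_sq, norm_smul, Real.norm_eq_abs, mul_pow, sq_abs,
    ← norm_sub_rev u v, norm_sub_sq_real]
  ring

private lemma BE_interp {q c₀ c₁ : EuclideanSpace ℝ (Fin d)} {ρ₀ ρ₁ : ℝ}
    (h₀ : dist q c₀ ^ 2 < ρ₀) (h₁ : ρ₁ ≤ dist q c₁ ^ 2) :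
    ∃ (t : ℝ) (c : EuclideanSpace ℝ (Fin d)) (ρ : ℝ), 0 ≤ t ∧ t ≤ 1 ∧
      dist q c ^ 2 = ρ ∧ ρ ≤ (1-t)*ρ₀ + t*ρ₁ ∧
      ∀ p, dist p c ^ 2 - ρ = (1-t)*(dist p c₀ ^ 2 - ρ₀) + t*(dist p c₁ ^ 2 - ρ₁) := by
  have ha : dist q c₀ ^ 2 - ρ₀ < 0 := by linarith
  have hb : 0 ≤ dist q c₁ ^ 2 - ρ₁ := by linarith
  set a := dist q c₀ ^ 2 - ρ₀ with ha'
  set b := dist q c₁ ^ 2 - ρ₁ with hb'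
  have hab : a - b < 0 := by linarith
  set t := a / (a - b) with ht'
  have ht0 : 0 ≤ t := by
    rw [ht', div_nonneg_iff]; right; exact ⟨ha.le, hab.le⟩
  have ht1 : t ≤ 1 := by
    rw [ht', div_le_one_iff]; right; right; exact ⟨hab, by linarith⟩
  have hkey : (1-t)*a + t*b = 0 := by
    have hne : a - b ≠ 0 := ne_of_lt hab
    have h2 : t * (a - b) = a := by rw [ht']; field_simp
    linear_combination (-1 : ℝ) * h2
  have hid : ∀ p : EuclideanSpace ℝ (Fin d),
      dist p ((1-t)•c₀ + t•c₁) ^ 2 - ((1-t)*ρ₀ + t*ρ₁ - t*(1-t)*‖c₀-c₁‖^2)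
        = (1-t)*(dist p c₀ ^ 2 - ρ₀) + t*(dist p c₁ ^ 2 - ρ₁) := by
    intro p
    have h3 : (1-t)•(p - c₀) + t•(p - c₁) = p - ((1-t)•c₀ + t•c₁) := by module
    have h4 := BE_normid t (p - c₀) (p - c₁)
    rw [h3] at h4
    have h5 : (p - c₀) - (p - c₁) = c₁ - c₀ := by abel
    rw [h5, norm_sub_rev c₁ c₀] at h4
    simp only [dist_eq_norm]
    linear_combination h4
  refine ⟨t, (1-t)•c₀ + t•c₁, (1-t)*ρ₀ + t*ρ₁ - t*(1-t)*‖c₀-c₁‖^2, ht0, ht1, ?_, ?_, hid⟩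
  · have h6 := hid q
    rw [ha'] at hkey
    rw [hb'] at hkey
    linear_combination h6 + hkey
  · nlinarith [sq_nonneg ‖c₀ - c₁‖, mul_nonneg ht0 (by linarith : (0:ℝ) ≤ 1 - t)]
private lemma BE_sq_iff {x : Fin n → EuclideanSpace ℝ (Fin d)} {r : ℝ} (hr : 0 ≤ r)
    (Y E σ : Finset (Fin n)) :
    SelDelMem x Y E r σ ↔ σ.Nonempty ∧ σ ⊆ Y ∧
      ∃ (c : EuclideanSpace ℝ (Fin d)) (ρ : ℝ), ρ ≤ r^2 ∧
        (∀ p ∈ σ, dist (x p) c ^ 2 ≤ ρ) ∧ ∀ p ∈ E, ρ ≤ dist (x p) c ^ 2 := by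
  constructor
  · rintro ⟨hne, hsub, c, r', hr', henc, hexc⟩
    obtain ⟨p₀, hp₀⟩ := hne
    have h0' : 0 ≤ r' := le_trans dist_nonneg (henc p₀ hp₀)
    refine ⟨⟨p₀, hp₀⟩, hsub, c, r'^2, pow_le_pow_left₀ h0' hr' 2,
      fun p hp => pow_le_pow_left₀ dist_nonneg (henc p hp) 2,
      fun p hp => pow_le_pow_left₀ h0' (hexc p hp) 2⟩
  · rintro ⟨hne, hsub, c, ρ, hρ, henc, hexc⟩
    refine ⟨hne, hsub, c, Real.sqrt ρ, ?_, fun p hp => ?_, fun p hp => ?_⟩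
    · calc Real.sqrt ρ ≤ Real.sqrt (r^2) := Real.sqrt_le_sqrt hρ
        _ = r := Real.sqrt_sq hr
    · calc dist (x p) c = Real.sqrt (dist (x p) c ^ 2) := (Real.sqrt_sq dist_nonneg).symm
        _ ≤ Real.sqrt ρ := Real.sqrt_le_sqrt (henc p hp)
    · calc Real.sqrt ρ ≤ Real.sqrt (dist (x p) c ^ 2) := Real.sqrt_le_sqrt (hexc p hp)
        _ = dist (x p) c := Real.sqrt_sq dist_nonneg

private lemma BE_down_sel {x : Fin n → EuclideanSpace ℝ (Fin d)} {Y E : Finset (Fin n)}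
    {r : ℝ} {τ α : Finset (Fin n)} (h : SelDelMem x Y E r τ) (hsub : α ⊆ τ)
    (hα : α.Nonempty) : SelDelMem x Y E r α := by
  obtain ⟨_, hτY, c, r', h1, h2, h3⟩ := h
  exact ⟨hα, fun p hp => hτY (hsub hp), c, r', h1, fun p hp => h2 p (hsub hp), h3⟩

private lemma BE_down_del {x : Fin n → EuclideanSpace ℝ (Fin d)} {γ : Fin n → ℝ}
    (hγ : Monotone γ) {r s : ℝ} {τ α : Finset (Fin n)} (h : DelBiMem x γ r s τ)
    (hsub : α ⊆ τ) (hα : α.Nonempty) : DelBiMem x γ r s α := by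
  obtain ⟨hτ, hγτ, _, _, c, r', h1, h2, h3⟩ := h
  have hk : α.max' hα ≤ τ.max' hτ := Finset.le_max' τ _ (hsub (α.max'_mem hα))
  refine ⟨hα, le_trans (hγ hk) hγτ, hα,
    fun p hp => Finset.mem_filter.mpr ⟨Finset.mem_univ _, Finset.le_max' α p hp⟩,
    c, r', h1, fun p hp => h2 p (hsub hp), fun p hp => ?_⟩
  refine h3 p (Finset.mem_filter.mpr ⟨Finset.mem_univ _, ?_⟩)
  exact lt_of_lt_of_le (Finset.mem_filter.mp hp).2 hk

private lemma BE_pairing (x : Fin n → EuclideanSpace ℝ (Fin d)) (γ : Fin n → ℝ)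
    (hγ : Monotone γ) (r s : ℝ) (hr : 0 ≤ r) (j : Fin n) (hj : γ j ≤ s)
    (i : Fin n) (hij : i ≤ j) (σ : Finset (Fin n))
    (hB : σ ∈ Ubefore x γ r s j i) (hA : σ ∉ Uafter x γ r s j i) :
    (σ.erase i ∈ Ubefore x γ r s j i ∧ σ.erase i ∉ Uafter x γ r s j i) ∧
    (insert i σ ∈ Ubefore x γ r s j i ∧ insert i σ ∉ Uafter x γ r s j i) := by
  classical
  simp only [Ubefore, Uafter, Set.mem_setOf_eq] at hB hA ⊢
  push_neg at hA
  obtain ⟨hA1, hA2⟩ := hA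
  have h0 : SelDelMem x (Finset.univ.filter fun t => t ≤ j)
      (Finset.univ.filter fun t => t < i) r σ := hB.resolve_right hA2
  obtain ⟨hne, hsubY, c₀, ρ₀, hρ₀r, henc₀, hexc₀⟩ := (BE_sq_iff hr _ _ _).mp h0
  set m := σ.max' hne with hm'
  have hmj : m ≤ j := (Finset.mem_filter.mp (hsubY (σ.max'_mem hne))).2
  have hγm : γ m ≤ s := le_trans (hγ hmj) hj
  -- i < m
  have hmi : i < m := by
    by_contra hle
    push_neg at hle
    refine hA2 ⟨hne, hγm, (BE_sq_iff hr _ _ _).mpr ⟨hne,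
      fun p hp => Finset.mem_filter.mpr ⟨Finset.mem_univ _, Finset.le_max' σ p hp⟩,
      c₀, ρ₀, hρ₀r, henc₀, fun p hp => ?_⟩⟩
    refine hexc₀ p (Finset.mem_filter.mpr ⟨Finset.mem_univ _, ?_⟩)
    exact lt_of_lt_of_le (Finset.mem_filter.mp hp).2 hle
  -- every squared witness of σ w.r.t. X_{<i} has x i strictly inside
  have hstrict : ∀ (c : EuclideanSpace ℝ (Fin d)) (ρ : ℝ), ρ ≤ r^2 →
      (∀ p ∈ σ, dist (x p) c ^ 2 ≤ ρ) →
      (∀ p : Fin n, p < i → ρ ≤ dist (x p) c ^ 2) → dist (x i) c ^ 2 < ρ := by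
    intro c ρ h1 h2 h3
    by_contra hge
    push_neg at hge
    refine hA1 ((BE_sq_iff hr _ _ _).mpr ⟨hne, hsubY, c, ρ, h1, h2, fun p hp => ?_⟩)
    rcases (Finset.mem_filter.mp hp).2.lt_or_eq with h | h
    · exact h3 p h
    · rw [h]; exact hge
  have hi0 : dist (x i) c₀ ^ 2 < ρ₀ := by
    refine hstrict c₀ ρ₀ hρ₀r henc₀ (fun p hp => ?_)
    exact hexc₀ p (Finset.mem_filter.mpr ⟨Finset.mem_univ _, hp⟩)
  have him : i ≠ m := ne_of_lt hmi
  have hmm : m ∈ σ.erase i := Finset.mem_erase.mpr ⟨him.symm, σ.max'_mem hne⟩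
  -- (C)  erase ∉ SelDel(Y, X_{≤ i})  -- the geometric step
  have hCsel : ¬ SelDelMem x (Finset.univ.filter fun t => t ≤ j)
      (Finset.univ.filter fun t => t ≤ i) r (σ.erase i) := by
    intro h
    obtain ⟨hne', hsub', c₁, ρ₁, hρ₁r, henc₁, hexc₁⟩ := (BE_sq_iff hr _ _ _).mp h
    have hqi : ρ₁ ≤ dist (x i) c₁ ^ 2 :=
      hexc₁ i (Finset.mem_filter.mpr ⟨Finset.mem_univ _, le_refl i⟩)
    obtain ⟨t, c, ρ, ht0, ht1, hqeq, hρle, hid⟩ := BE_interp hi0 hqi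
    refine hA1 ((BE_sq_iff hr _ _ _).mpr ⟨hne, hsubY, c, ρ, ?_, ?_, ?_⟩)
    · nlinarith
    · intro p hp
      by_cases hpi : p = i
      · rw [hpi]; exact le_of_eq hqeq
      · have h0p := henc₀ p hp
        have h1p := henc₁ p (Finset.mem_erase.mpr ⟨hpi, hp⟩)
        have hidp := hid (x p)
        nlinarith
    · intro p hp
      have hple : p ≤ i := (Finset.mem_filter.mp hp).2
      rcases hple.lt_or_eq with h | h
      · have h0p := hexc₀ p (Finset.mem_filter.mpr ⟨Finset.mem_univ _, h⟩)
        have h1p := hexc₁ p hp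
        have hidp := hid (x p)
        nlinarith
      · rw [h]; exact le_of_eq hqeq.symm
  -- (D)  erase ∉ Del
  have hCdel : ¬ DelBiMem x γ r s (σ.erase i) := by
    rintro ⟨hne', hγ', hsel'⟩
    have hmax : (σ.erase i).max' hne' = m := by
      refine le_antisymm (Finset.max'_le _ _ _ fun p hp => Finset.le_max' σ p (Finset.mem_of_mem_erase hp)) (Finset.le_max' _ m hmm)
    obtain ⟨_, _, c, r', h1, h2, h3⟩ := hsel'
    refine hCsel ⟨hne', fun p hp => hsubY (Finset.mem_of_mem_erase hp), c, r', h1, h2,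
      fun p hp => ?_⟩
    refine h3 p (Finset.mem_filter.mpr ⟨Finset.mem_univ _, ?_⟩)
    rw [hmax]
    exact lt_of_le_of_lt (Finset.mem_filter.mp hp).2 hmi
  -- erase ∈ SelDel(Y, X_{<i})
  have hEsel : SelDelMem x (Finset.univ.filter fun t => t ≤ j)
      (Finset.univ.filter fun t => t < i) r (σ.erase i) :=
    BE_down_sel h0 (Finset.erase_subset i σ) ⟨m, hmm⟩
  -- insert ∈ SelDel(Y, X_{<i})
  have hIsel : SelDelMem x (Finset.univ.filter fun t => t ≤ j)
      (Finset.univ.filter fun t => t < i) r (insert i σ) := by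
    refine (BE_sq_iff hr _ _ _).mpr ⟨Finset.insert_nonempty i σ, ?_, c₀, ρ₀, hρ₀r, ?_, hexc₀⟩
    · intro p hp
      rcases Finset.mem_insert.mp hp with rfl | hp
      · exact Finset.mem_filter.mpr ⟨Finset.mem_univ _, hij⟩
      · exact hsubY hp
    · intro p hp
      rcases Finset.mem_insert.mp hp with rfl | hp
      · exact hi0.le
      · exact henc₀ p hp
  have hIselA : ¬ SelDelMem x (Finset.univ.filter fun t => t ≤ j)
      (Finset.univ.filter fun t => t ≤ i) r (insert i σ) :=
    fun h => hA1 (BE_down_sel h (Finset.subset_insert i σ) hne)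
  have hIdel : ¬ DelBiMem x γ r s (insert i σ) :=
    fun h => hA2 (BE_down_del hγ h (Finset.subset_insert i σ) hne)
  exact ⟨⟨Or.inl hEsel, fun h => h.elim hCsel hCdel⟩,
    ⟨Or.inl hIsel, fun h => h.elim hIselA hIdel⟩⟩

private lemma BE_UA_sub_UB {x : Fin n → EuclideanSpace ℝ (Fin d)} {γ : Fin n → ℝ}
    {r s : ℝ} {j i : Fin n} : Uafter x γ r s j i ⊆ Ubefore x γ r s j i := by
  intro σ h
  simp only [Uafter, Ubefore, Set.mem_setOf_eq] at h ⊢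
  rcases h with h | h
  · obtain ⟨h1, h2, c, r', ha, hb, hc⟩ := h
    exact Or.inl ⟨h1, h2, c, r', ha, hb, fun p hp => hc p
      (Finset.mem_filter.mpr ⟨Finset.mem_univ _, le_of_lt (Finset.mem_filter.mp hp).2⟩)⟩
  · exact Or.inr h

private lemma BE_UB_nonempty {x : Fin n → EuclideanSpace ℝ (Fin d)} {γ : Fin n → ℝ}
    {r s : ℝ} {j i : Fin n} {σ : Finset (Fin n)} (h : σ ∈ Ubefore x γ r s j i) :
    σ.Nonempty := by
  simp only [Ubefore, Set.mem_setOf_eq] at h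
  rcases h with h | h
  · exact h.1
  · obtain ⟨h1, -⟩ := h; exact h1

private lemma BE_UA_down {x : Fin n → EuclideanSpace ℝ (Fin d)} {γ : Fin n → ℝ}
    (hγ : Monotone γ) {r s : ℝ} {j i : Fin n} {υ β : Finset (Fin n)}
    (h : υ ∈ Uafter x γ r s j i) (hsub : β ⊆ υ) (hβ : β.Nonempty) :
    β ∈ Uafter x γ r s j i := by
  simp only [Uafter, Set.mem_setOf_eq] at h ⊢
  rcases h with h | h
  · exact Or.inl (BE_down_sel h hsub hβ)
  · exact Or.inr (BE_down_del hγ h hsub hβ)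

private lemma BE_collapse (x : Fin n → EuclideanSpace ℝ (Fin d)) (γ : Fin n → ℝ)
    (hγ : Monotone γ) (r s : ℝ) (hr : 0 ≤ r) (j : Fin n) (hj : γ j ≤ s)
    (i : Fin n) (hij : i ≤ j) :
    CollapsesTo (Ubefore x γ r s j i) (Uafter x γ r s j i) := by
  classical
  have pairing := fun σ hB hA => BE_pairing x γ hγ r s hr j hj i hij σ hB hA
  set UB := Ubefore x γ r s j i with hUB'
  set UA := Uafter x γ r s j i with hUA'
  have main : ∀ (N : ℕ) (T : Finset (Finset (Fin n))), T.card = N →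
      (∀ α ∈ T, i ∉ α ∧ α ∈ UB ∧ α ∉ UA) →
      CollapsesTo (UA ∪ ⋃ α ∈ T, ({α, insert i α} : Set (Finset (Fin n)))) UA := by
    intro N
    induction N using Nat.strong_induction_on with
    | _ N IH =>
      intro T hTcard hT
      rcases T.eq_empty_or_nonempty with rfl | hTne
      · have he : (⋃ α ∈ (∅ : Finset (Finset (Fin n))),
            ({α, insert i α} : Set (Finset (Fin n)))) = ∅ := by simp
        rw [he, Set.union_empty]
        exact Relation.ReflTransGen.refl
      · obtain ⟨α, hαT, hαmax⟩ := T.exists_max_image (fun β => β.card) hTne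
        obtain ⟨hiα, hαUB, hαUA⟩ := hT α hαT
        have hpair := pairing α hαUB hαUA
        have hβUB : insert i α ∈ UB := hpair.2.1
        have hβUA : insert i α ∉ UA := hpair.2.2
        have hαne : α.Nonempty := BE_UB_nonempty hαUB
        set K := UA ∪ ⋃ α' ∈ T, ({α', insert i α'} : Set (Finset (Fin n))) with hK
        have hstep : ElemCollapse K (K \ {α, insert i α}) := by
          refine ⟨α, insert i α, ?_, ?_, Finset.ssubset_insert hiα, ?_, rfl⟩
          · exact Or.inr (Set.mem_biUnion hαT (by left; rfl))
          · exact Or.inr (Set.mem_biUnion hαT (by right; rfl))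
          · rintro υ (hυ | hυ) hsub
            · exact absurd (BE_UA_down hγ hυ hsub.subset hαne) hαUA
            · simp only [Set.mem_iUnion, Set.mem_insert_iff, Set.mem_singleton_iff,
                exists_prop] at hυ
              obtain ⟨α', hα'T, (rfl | rfl)⟩ := hυ
              · exact absurd (Finset.card_lt_card hsub) (not_lt.mpr (hαmax _ hα'T))
              · have hiα' : i ∉ α' := (hT α' hα'T).1
                have hsub2 : α ⊆ α' := by
                  intro p hp
                  rcases Finset.mem_insert.mp (hsub.subset hp) with rfl | h
                  · exact absurd hp hiα
                  · exact h
                by_cases heq : α = α'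
                · rw [heq]
                · exact absurd (Finset.card_lt_card
                    (Finset.ssubset_iff_subset_ne.mpr ⟨hsub2, heq⟩))
                    (not_lt.mpr (hαmax _ hα'T))
        have hKerase : UA ∪ ⋃ α' ∈ T.erase α, ({α', insert i α'} : Set (Finset (Fin n)))
            = K \ {α, insert i α} := by
          ext β
          simp only [hK, Set.mem_union, Set.mem_iUnion, Set.mem_diff, Set.mem_insert_iff,
            Set.mem_singleton_iff, Finset.mem_erase, exists_prop]
          constructor
          · rintro (hβ | ⟨α', ⟨hα'ne, hα'T⟩, hβ⟩)
            · refine ⟨Or.inl hβ, ?_⟩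
              rintro (rfl | rfl)
              · exact hαUA hβ
              · exact hβUA hβ
            · have hiα' : i ∉ α' := (hT α' hα'T).1
              refine ⟨Or.inr ⟨α', hα'T, hβ⟩, ?_⟩
              rcases hβ with rfl | rfl
              · rintro (rfl | heq)
                · exact hα'ne rfl
                · rw [heq] at hiα'; exact hiα' (Finset.mem_insert_self i α)
              · rintro (heq | heq)
                · rw [← heq] at hiα; exact hiα (Finset.mem_insert_self i α')
                · have := congrArg (fun A => Finset.erase A i) heq
                  simp only [Finset.erase_insert hiα', Finset.erase_insert hiα] at this
                  exact hα'ne this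
          · rintro ⟨(hβ | ⟨α', hα'T, hβ⟩), hnot⟩
            · exact Or.inl hβ
            · by_cases heq : α' = α
              · subst heq
                rcases hβ with rfl | rfl
                · exact absurd (Or.inl rfl) hnot
                · exact absurd (Or.inr rfl) hnot
              · exact Or.inr ⟨α', ⟨heq, hα'T⟩, hβ⟩
        have hcard : (T.erase α).card < N := by
          rw [← hTcard]; exact Finset.card_erase_lt_of_mem hαT
        have htail := IH (T.erase α).card hcard (T.erase α) rfl
          (fun α' hα' => hT α' (Finset.mem_of_mem_erase hα'))
        rw [hKerase] at htail
        exact Relation.ReflTransGen.head hstep htail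
  have hfin : {α : Finset (Fin n) | i ∉ α ∧ α ∈ UB ∧ α ∉ UA}.Finite := Set.toFinite _
  have hcover : UB = UA ∪ ⋃ α ∈ hfin.toFinset, ({α, insert i α} : Set (Finset (Fin n))) := by
    ext σ
    simp only [Set.mem_union, Set.mem_iUnion, Set.Finite.mem_toFinset, Set.mem_setOf_eq,
      Set.mem_insert_iff, Set.mem_singleton_iff, exists_prop]
    constructor
    · intro hσ
      by_cases hA : σ ∈ UA
      · exact Or.inl hA
      by_cases hi : i ∈ σ
      · refine Or.inr ⟨σ.erase i, ⟨Finset.notMem_erase i σ,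
          (pairing σ hσ hA).1.1, (pairing σ hσ hA).1.2⟩, Or.inr ?_⟩
        rw [Finset.insert_erase hi]
      · exact Or.inr ⟨σ, ⟨hi, hσ, hA⟩, Or.inl rfl⟩
    · rintro (h | ⟨α, ⟨hiα, hαUB, hαUA⟩, (rfl | rfl)⟩)
      · exact BE_UA_sub_UB h
      · exact hαUB
      · exact (pairing α hαUB hαUA).2.1
  rw [hcover]
  exact main _ _ rfl (fun α hα => (Set.Finite.mem_toFinset hfin).mp hα)

private lemma BE_succ_eq {x : Fin n → EuclideanSpace ℝ (Fin d)} {γ : Fin n → ℝ}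
    {r s : ℝ} (j i i' : Fin n) (h : (i' : ℕ) = (i : ℕ) + 1) :
    Uafter x γ r s j i = Ubefore x γ r s j i' := by
  have hE : (Finset.univ.filter fun t : Fin n => t ≤ i)
      = (Finset.univ.filter fun t : Fin n => t < i') := by
    apply Finset.filter_congr
    intro t _
    simp only [Fin.lt_def, Fin.le_def, h, Nat.lt_succ_iff]
  unfold Uafter Ubefore
  rw [hE]

private lemma BE_del_of_selY {x : Fin n → EuclideanSpace ℝ (Fin d)} {γ : Fin n → ℝ}
    (hγ : Monotone γ) {r s : ℝ} (j : Fin n) (hj : γ j ≤ s) {σ : Finset (Fin n)}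
    (h : SelDelMem x (Finset.univ.filter fun t => t ≤ j)
      (Finset.univ.filter fun t => t ≤ j) r σ) :
    DelBiMem x γ r s σ := by
  obtain ⟨hne, hsub, c, r', h1, h2, h3⟩ := h
  have hk : σ.max' hne ≤ j := (Finset.mem_filter.mp (hsub (σ.max'_mem hne))).2
  refine ⟨hne, le_trans (hγ hk) hj, hne,
    fun p hp => Finset.mem_filter.mpr ⟨Finset.mem_univ _, Finset.le_max' σ p hp⟩,
    c, r', h1, h2, fun p hp => ?_⟩
  exact h3 p (Finset.mem_filter.mpr ⟨Finset.mem_univ _,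
    le_trans (le_of_lt (Finset.mem_filter.mp hp).2) hk⟩)

/-- If `σ ∈ U_{i-1} \ U_i` then both `σ - x_i` and `σ + x_i` lie in `U_{i-1} \ U_i`; hence
`U_{i-1} \ U_i` is partitioned into pairs forming a gradient whose collapse gives
`U_{i-1} ↘ U_i`, and consequently `Čech_{r,s}(γ) ↘ Del_{r,s}(γ)`. -/
theorem cech_collapses_to_del (x : Fin n → EuclideanSpace ℝ (Fin d))
    (hinj : Function.Injective x)
    (γ : Fin n → ℝ) (hγ : Monotone γ) (r s : ℝ) (hr : 0 ≤ r)
    (j : Fin n) (hj : γ j ≤ s) (hjmax : ∀ i, γ i ≤ s → i ≤ j) :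
    (∀ i : Fin n, i ≤ j → ∀ σ : Finset (Fin n),
        σ ∈ Ubefore x γ r s j i → σ ∉ Uafter x γ r s j i →
        (σ.erase i ∈ Ubefore x γ r s j i ∧ σ.erase i ∉ Uafter x γ r s j i) ∧
        (insert i σ ∈ Ubefore x γ r s j i ∧ insert i σ ∉ Uafter x γ r s j i)) ∧
    (∀ i : Fin n, i ≤ j →
        CollapsesTo (Ubefore x γ r s j i) (Uafter x γ r s j i)) ∧
    CollapsesTo
      {σ | SelDelMem x (Finset.univ.filter fun t => t ≤ j) (∅ : Finset (Fin n)) r σ}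
      {σ | DelBiMem x γ r s σ} := by
  refine ⟨fun i hij σ hB hA => BE_pairing x γ hγ r s hr j hj i hij σ hB hA,
    fun i hij => BE_collapse x γ hγ r s hr j hj i hij, ?_⟩
  -- U_j = Del
  have hUAj : Uafter x γ r s j j = {σ | DelBiMem x γ r s σ} := by
    ext σ
    simp only [Uafter, Set.mem_setOf_eq]
    constructor
    · rintro (h | h)
      · exact BE_del_of_selY hγ j hj h
      · exact h
    · exact Or.inr
  -- chain of collapses from U_i to Del
  have chain : ∀ (k : ℕ) (i : Fin n), i ≤ j → (j : ℕ) - (i : ℕ) = k →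
      CollapsesTo (Ubefore x γ r s j i) {σ | DelBiMem x γ r s σ} := by
    intro k
    induction k with
    | zero =>
      intro i hij hk
      have hji : i = j := le_antisymm hij (Fin.le_def.mpr (Nat.le_of_sub_eq_zero hk))
      subst hji
      rw [← hUAj]
      exact BE_collapse x γ hγ r s hr i hj i le_rfl
    | succ k IH =>
      intro i hij hk
      have hlt : (i : ℕ) < (j : ℕ) := by omega
      have hi' : (i : ℕ) + 1 < n := Nat.lt_of_le_of_lt hlt j.isLt
      set i' : Fin n := ⟨(i : ℕ) + 1, hi'⟩ with hi''
      have hij' : i' ≤ j := Fin.le_def.mpr (Nat.succ_le_of_lt hlt)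
      have hk' : (j : ℕ) - (i' : ℕ) = k := by
        have : (i' : ℕ) = (i : ℕ) + 1 := rfl
        omega
      have h2 := IH i' hij' hk'
      rw [← BE_succ_eq j i i' rfl] at h2
      exact Relation.ReflTransGen.trans
        (BE_collapse x γ hγ r s hr j hj i hij) h2
  -- Čech = U_{-1}
  have h0n : 0 < n := j.pos
  have hE : (Finset.univ.filter fun t : Fin n => t < (⟨0, h0n⟩ : Fin n)) = ∅ := by
    ext t
    simp [Fin.lt_def]
  have hcech : {σ | SelDelMem x (Finset.univ.filter fun t => t ≤ j)
      (∅ : Finset (Fin n)) r σ} = Ubefore x γ r s j ⟨0, h0n⟩ := by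
    ext σ
    simp only [Ubefore, Set.mem_setOf_eq, hE]
    constructor
    · exact Or.inl
    · rintro (h | h)
      · exact h
      · obtain ⟨hne, hγs, _, hsub, c, r', h1, h2, h3⟩ := h
        have hk : σ.max' hne ≤ j := hjmax _ hγs
        exact ⟨hne, fun p hp => Finset.mem_filter.mpr ⟨Finset.mem_univ _,
          le_trans (Finset.le_max' σ p hp) hk⟩, c, r', h1, h2,
          fun p hp => absurd hp (Finset.notMem_empty p)⟩
  rw [hcech]
  exact chain (j : ℕ) ⟨0, h0n⟩ (Fin.le_def.mpr (Nat.zero_le _)) (by simp)
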